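/- Let G be a finite simple graph, let m be a vertex, and let u and v be two distinct neighbors of m (G.Adj m u and G.Adj m v with u ≠ v). Then there exists a cycle in G whose support contains u, m, and v if and only if there is a walk from u to v in G whose support does not contain m. -/

import Mathlib

open SimpleGraph Walk

private lemma takeUntil_avoid {V : Type*} [DecidableEq V] {G : SimpleGraph V} {w m x : V}
    (p : G.Walk w m) (hp : p.IsPath) (hx : x ∈ p.support) (hxm : x ≠ m) :
    m ∉ (p.takeUntil x hx).support := by
  intro hm
  have hspec := p.take_spec hx
  have hnd : p.support.Nodup := hp.support_nodup
  rw [← hspec, Walk.support_append] at hnd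
  have hm2 : m ∈ (p.dropUntil x hx).support.tail := by
    have hend : m ∈ (p.dropUntil x hx).support := Walk.end_mem_support _
    have : (p.dropUntil x hx).support = x :: (p.dropUntil x hx).support.tail := by
      rw [← Walk.support_eq_cons]
    rw [this] at hend
    rcases List.mem_cons.mp hend with hend | hend
    · exact absurd hend.symm hxm
    · exact hend
  exact (List.disjoint_of_nodup_append hnd) hm hm2

theorem stmt_5 {V : Type*} [Fintype V] (G : SimpleGraph V) {m u v : V}
    (hu : G.Adj m u) (hv : G.Adj m v) (huv : u ≠ v) :
    (∃ (x : V) (c : G.Walk x x), c.IsCycle ∧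
        u ∈ c.support ∧ m ∈ c.support ∧ v ∈ c.support) ↔
      ∃ q : G.Walk u v, m ∉ q.support := by
  classical
  constructor
  · rintro ⟨x, c, hc, hus, hms, hvs⟩
    -- rotate the cycle to start at m
    have hc' : (c.rotate m hms).IsCycle := hc.rotate hms
    have hrot : ∀ y, y ∈ c.support → y ∈ (c.rotate m hms).support := by
      intro y hy
      rw [Walk.rotate, Walk.mem_support_append_iff]
      rw [← c.take_spec hms, Walk.mem_support_append_iff] at hy
      tauto
    have hus' : u ∈ (c.rotate m hms).support := hrot u hus
    have hvs' : v ∈ (c.rotate m hms).support := hrot v hvs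
    set c' := c.rotate m hms with hc'def
    clear_value c'
    cases c' with
    | nil => exact absurd hc' (by simp)
    | cons h p =>
      rw [Walk.cons_isCycle_iff] at hc'
      have hp : p.IsPath := hc'.1
      have hum : u ≠ m := fun h => (h ▸ hu).ne rfl
      have hvm : v ≠ m := fun h => (h ▸ hv).ne rfl
      have hup : u ∈ p.support := by
        simpa [hum] using hus'
      have hvp : v ∈ p.support := by
        simpa [hvm] using hvs'
      by_cases huv' : u ∈ (p.takeUntil v hvp).support
      · refine ⟨(p.takeUntil v hvp).dropUntil u huv', fun hm => ?_⟩
        exact takeUntil_avoid p hp hvp hvm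
          (Walk.support_dropUntil_subset _ huv' hm)
      · have hud : u ∈ (p.dropUntil v hvp).support := by
          have := p.take_spec hvp
          have hmem : u ∈ ((p.takeUntil v hvp).append (p.dropUntil v hvp)).support := by
            rw [this]; exact hup
          rw [Walk.mem_support_append_iff] at hmem
          tauto
        refine ⟨((p.dropUntil v hvp).takeUntil u hud).reverse, fun hm => ?_⟩
        rw [Walk.support_reverse, List.mem_reverse] at hm
        exact takeUntil_avoid (p.dropUntil v hvp) (hp.dropUntil hvp) hud hum hm
  · rintro ⟨q, hmq⟩
    set p := q.toPath with hpdef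
    have hp : (p : G.Walk u v).IsPath := p.2
    have hmp : m ∉ (p : G.Walk u v).support := fun h => hmq (q.support_toPath_subset h)
    refine ⟨m, Walk.cons hu ((p : G.Walk u v).append (Walk.cons hv.symm Walk.nil)), ?_, ?_, ?_, ?_⟩
    · rw [Walk.cons_isCycle_iff]
      constructor
      · rw [Walk.isPath_def, Walk.support_append]
        simp only [Walk.support_cons, Walk.support_nil, List.tail_cons]
        rw [List.nodup_append]
        refine ⟨hp.support_nodup, List.nodup_singleton m, ?_⟩
        intro a ha b hb hab
        rw [List.mem_singleton] at hb
        exact hmp (hb ▸ hab ▸ ha)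
      · rw [Walk.edges_append]
        simp only [List.mem_append, Walk.edges_cons, Walk.edges_nil]
        rintro (he | he)
        · exact hmp (Walk.fst_mem_support_of_mem_edges _ he)
        · simp only [List.mem_singleton, Sym2.eq, Sym2.rel_iff', Prod.mk.injEq,
            Prod.swap_prod_mk] at he
          rcases he with ⟨h1, h2⟩ | ⟨h1, h2⟩
          · exact hu.ne h2.symm
          · exact huv h2
    · simp [Walk.support_append]
    · simp
    · simp [Walk.support_append, Walk.end_mem_support]
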